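/- Let a ∈ A and let η^s, η^{(1)}, η^{(2)} ∈ P_a with η^s = α·η^{(1)} + (1−α)·η^{(2)} for some α ∈ (0,1), and suppose (R(η^s) − R(η^{(1)}))·(C(η^s) − C(η^{(1)})) > 0. Then α·R(η^{(1)})·C(η^{(1)}) + (1−α)·R(η^{(2)})·C(η^{(2)}) > R(η^s)·C(η^s). Consequently, no feasible family attaining the supremum of the single-type problem can place positive weight on a posterior η^s ∈ P_a admitting such a decomposition. -/

import Mathlib

open Finset
open scoped Classical

noncomputable section

/-- The probability simplex in `ℝ^n`. -/
def simplex (n : ℕ) : Set (Fin n → ℝ) :=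
  {η | (∀ ω, 0 ≤ η ω) ∧ ∑ ω, η ω = 1}

variable {n : ℕ} {A : Type*} [Fintype A] [Nonempty A]

/-- `u*(ω) = max_{a ∈ A} u(ω, a)`. -/
def uStar (u : Fin n → A → ℝ) (ω : Fin n) : ℝ :=
  Finset.univ.sup' Finset.univ_nonempty (u ω)

/-- `C_a(η) = Σ_ω η_ω (u*(ω) − u(ω,a))`, the expected regret of action `a`. -/
def Ca (u : Fin n → A → ℝ) (a : A) (η : Fin n → ℝ) : ℝ :=
  ∑ ω, η ω * (uStar u ω - u ω a)

/-- The cost of uncertainty `C(η) = min_a C_a(η)`. -/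
def Cost (u : Fin n → A → ℝ) (η : Fin n → ℝ) : ℝ :=
  Finset.univ.inf' Finset.univ_nonempty (fun a => Ca u a η)

/-- `P_a`: the polytope of beliefs under which `a` is a best action. -/
def Pa (u : Fin n → A → ℝ) (a : A) : Set (Fin n → ℝ) :=
  {η | η ∈ simplex n ∧ ∀ a' : A, Ca u a η ≤ Ca u a' η}

/-- The likelihood ratio `R(η) = Σ_ω μ_ω η_ω / θ_ω`. -/
def Ratio (μ θ η : Fin n → ℝ) : ℝ := ∑ ω, μ ω * η ω / θ ω

/-- The set of feasible objective values of the single-type problem. -/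
def ConcaveSet (u : Fin n → A → ℝ) (μ θ : Fin n → ℝ) : Set ℝ :=
  {v | ∃ (m : ℕ) (φ : Fin m → ℝ) (η : Fin m → Fin n → ℝ),
    (∀ s, 0 ≤ φ s) ∧ (∀ s, η s ∈ simplex n) ∧
    (∀ ω, ∑ s, φ s * η s ω = θ ω) ∧
    v = ∑ s, φ s * Ratio μ θ (η s) * Cost u (η s)}

lemma simplex_le_one {η : Fin n → ℝ} (h : η ∈ simplex n) (ω : Fin n) : η ω ≤ 1 := by
  rcases h with ⟨h0, h1⟩
  calc η ω ≤ ∑ x, η x := Finset.single_le_sum (fun i _ => h0 i) (Finset.mem_univ ω)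
  _ = 1 := h1

lemma ratio_lin (μ θ η₁ η₂ : Fin n → ℝ) (α : ℝ) :
    Ratio μ θ (fun ω => α * η₁ ω + (1-α) * η₂ ω)
      = α * Ratio μ θ η₁ + (1-α) * Ratio μ θ η₂ := by
  simp only [Ratio, Finset.mul_sum, ← Finset.sum_add_distrib]
  exact Finset.sum_congr rfl fun ω _ => by ring

lemma ca_lin (u : Fin n → A → ℝ) (a : A) (η₁ η₂ : Fin n → ℝ) (α : ℝ) :
    Ca u a (fun ω => α * η₁ ω + (1-α) * η₂ ω)
      = α * Ca u a η₁ + (1-α) * Ca u a η₂ := by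
  simp only [Ca, Finset.mul_sum, ← Finset.sum_add_distrib]
  exact Finset.sum_congr rfl fun ω _ => by ring

lemma cost_eq_Ca {u : Fin n → A → ℝ} {a : A} {η : Fin n → ℝ} (h : η ∈ Pa u a) :
    Cost u η = Ca u a η := by
  refine le_antisymm (Finset.inf'_le _ (Finset.mem_univ a)) ?_
  exact Finset.le_inf' _ _ fun a' _ => h.2 a'

lemma uStar_ge (u : Fin n → A → ℝ) (ω : Fin n) (a : A) : u ω a ≤ uStar u ω :=
  Finset.le_sup' (u ω) (Finset.mem_univ a)

lemma ratio_nonneg {μ θ : Fin n → ℝ} (hμ : μ ∈ simplex n) (hθpos : ∀ ω, 0 < θ ω)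
    {η : Fin n → ℝ} (hη : η ∈ simplex n) : 0 ≤ Ratio μ θ η :=
  Finset.sum_nonneg fun ω _ => div_nonneg (mul_nonneg (hμ.1 ω) (hη.1 ω)) (hθpos ω).le

lemma ratio_le {μ θ : Fin n → ℝ} (hμ : μ ∈ simplex n) (hθpos : ∀ ω, 0 < θ ω)
    {η : Fin n → ℝ} (hη : η ∈ simplex n) : Ratio μ θ η ≤ ∑ ω, μ ω / θ ω := by
  refine Finset.sum_le_sum fun ω _ => ?_
  rw [div_le_div_iff_of_pos_right (hθpos ω)]
  nlinarith [hμ.1 ω, simplex_le_one hη ω, hη.1 ω]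

lemma cost_nonneg (u : Fin n → A → ℝ) {η : Fin n → ℝ} (hη : η ∈ simplex n) :
    0 ≤ Cost u η := by
  refine Finset.le_inf' _ _ fun a' _ => Finset.sum_nonneg fun ω _ => ?_
  exact mul_nonneg (hη.1 ω) (by linarith [uStar_ge u ω a'])

lemma cost_le (u : Fin n → A → ℝ) (a₀ : A) {η : Fin n → ℝ} (hη : η ∈ simplex n) :
    Cost u η ≤ ∑ ω, (uStar u ω - u ω a₀) := by
  refine le_trans (Finset.inf'_le _ (Finset.mem_univ a₀)) ?_
  refine Finset.sum_le_sum fun ω _ => ?_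
  nlinarith [simplex_le_one hη ω, hη.1 ω, uStar_ge u ω a₀]

lemma concave_bdd (u : Fin n → A → ℝ) (μ θ : Fin n → ℝ)
    (hμ : μ ∈ simplex n) (hθ : θ ∈ simplex n) (hθpos : ∀ ω, 0 < θ ω) :
    BddAbove (ConcaveSet u μ θ) := by
  have a₀ : A := Classical.arbitrary A
  set MR := ∑ ω, μ ω / θ ω with hMR
  set B := ∑ ω, (uStar u ω - u ω a₀) with hB
  have hMR0 : 0 ≤ MR := Finset.sum_nonneg fun ω _ => div_nonneg (hμ.1 ω) (hθpos ω).le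
  have hB0 : 0 ≤ B := Finset.sum_nonneg fun ω _ => by linarith [uStar_ge u ω a₀]
  refine ⟨MR * B, fun v hv => ?_⟩
  obtain ⟨m, φ, η, hφ, hη, hfeas, hval⟩ := hv
  have hsum1 : ∑ s, φ s = 1 := by
    have := Finset.sum_congr rfl (fun ω (_ : ω ∈ Finset.univ) => hfeas ω)
    rw [Finset.sum_comm] at this
    calc ∑ s, φ s = ∑ s, ∑ ω, φ s * η s ω := by
          refine Finset.sum_congr rfl fun s _ => ?_
          rw [← Finset.mul_sum, (hη s).2, mul_one]
      _ = ∑ ω, θ ω := this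
      _ = 1 := hθ.2
  rw [hval]
  calc ∑ s, φ s * Ratio μ θ (η s) * Cost u (η s) ≤ ∑ s, φ s * (MR * B) := by
        refine Finset.sum_le_sum fun s _ => ?_
        have h1 := ratio_nonneg hμ hθpos (hη s)
        have h2 := ratio_le hμ hθpos (hη s)
        have h3 := cost_nonneg u (hη s)
        have h4 := cost_le u a₀ (hη s)
        have h5 := hφ s
        calc φ s * Ratio μ θ (η s) * Cost u (η s)
            ≤ φ s * MR * Cost u (η s) := by
              apply mul_le_mul_of_nonneg_right _ h3
              exact mul_le_mul_of_nonneg_left h2 h5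
          _ ≤ φ s * MR * B := by
              apply mul_le_mul_of_nonneg_left h4 (mul_nonneg h5 hMR0)
          _ = φ s * (MR * B) := by ring
    _ = MR * B := by rw [← Finset.sum_mul, hsum1, one_mul]

lemma sum_update_mul {m : ℕ} (φ : Fin m → ℝ) (η : Fin m → Fin n → ℝ) (s₀ : Fin m)
    (b : ℝ) (v : Fin n → ℝ) (G : (Fin n → ℝ) → ℝ) :
    ∑ i, (Function.update φ s₀ b) i * G ((Function.update η s₀ v) i)
      = ∑ i, φ i * G (η i) - φ s₀ * G (η s₀) + b * G v := by
  have key : ∀ i, (Function.update φ s₀ b) i * G ((Function.update η s₀ v) i) =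
      Function.update (fun i => φ i * G (η i)) s₀ (b * G v) i := by
    intro i
    by_cases h : i = s₀
    · subst h; simp
    · simp [Function.update_of_ne h]
  rw [Finset.sum_congr rfl fun i _ => key i,
    Finset.sum_update_of_mem (Finset.mem_univ s₀)]
  rw [show (Finset.univ : Finset (Fin m)) \ {s₀} = Finset.univ.erase s₀ by
    rw [Finset.sdiff_singleton_eq_erase]]
  rw [← Finset.add_sum_erase Finset.univ _ (Finset.mem_univ s₀)]
  ring

/-- if `η^s ∈ P_a` is decomposed within `P_a` along a direction with a
positive slope, then the decomposition strictly increases `R·C`; consequently no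
feasible family attaining the supremum of the single-type problem can place positive
weight on such a posterior. -/
theorem stmt4 (hn : 1 ≤ n) (u : Fin n → A → ℝ)
    (μ θ : Fin n → ℝ) (hμ : μ ∈ simplex n) (hθ : θ ∈ simplex n)
    (hθpos : ∀ ω, 0 < θ ω)
    (a : A) (ηs η₁ η₂ : Fin n → ℝ)
    (hηs : ηs ∈ Pa u a) (hη₁ : η₁ ∈ Pa u a) (hη₂ : η₂ ∈ Pa u a)
    (α : ℝ) (hα0 : 0 < α) (hα1 : α < 1)
    (hdec : ηs = fun ω => α * η₁ ω + (1 - α) * η₂ ω)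
    (hslope : (Ratio μ θ ηs - Ratio μ θ η₁) * (Cost u ηs - Cost u η₁) > 0) :
    Ratio μ θ ηs * Cost u ηs <
      α * (Ratio μ θ η₁ * Cost u η₁) + (1 - α) * (Ratio μ θ η₂ * Cost u η₂) ∧
    (∀ (m : ℕ) (φ : Fin m → ℝ) (η : Fin m → Fin n → ℝ),
      (∀ s, 0 ≤ φ s) → (∀ s, η s ∈ simplex n) →
      (∀ ω, ∑ s, φ s * η s ω = θ ω) →
      (∑ s, φ s * Ratio μ θ (η s) * Cost u (η s)) = sSup (ConcaveSet u μ θ) →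
      ∀ s, η s = ηs → φ s = 0) := by
  have h1α : (0:ℝ) < 1 - α := by linarith
  have hRs : Ratio μ θ ηs = α * Ratio μ θ η₁ + (1-α) * Ratio μ θ η₂ := by
    rw [hdec, ratio_lin]
  have hCs : Cost u ηs = α * Cost u η₁ + (1-α) * Cost u η₂ := by
    rw [cost_eq_Ca hηs, cost_eq_Ca hη₁, cost_eq_Ca hη₂, hdec, ca_lin]
  set R₁ := Ratio μ θ η₁
  set R₂ := Ratio μ θ η₂
  set C₁ := Cost u η₁
  set C₂ := Cost u η₂
  rw [hRs, hCs] at hslope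
  have hprod : 0 < (R₂ - R₁) * (C₂ - C₁) := by nlinarith [sq_nonneg (1-α)]
  have hkey : Ratio μ θ ηs * Cost u ηs <
      α * (R₁ * C₁) + (1 - α) * (R₂ * C₂) := by
    rw [hRs, hCs]
    nlinarith [mul_pos (mul_pos hα0 h1α) hprod]
  refine ⟨hkey, ?_⟩
  intro m φ η hφ hη hfeas hopt s hs
  by_contra hne
  have hpos : 0 < φ s := lt_of_le_of_ne (hφ s) (Ne.symm hne)
  set φ' : Fin (m+1) → ℝ := Fin.snoc (Function.update φ s (α * φ s)) ((1-α) * φ s)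
    with hφ'
  set η' : Fin (m+1) → Fin n → ℝ := Fin.snoc (Function.update η s η₁) η₂ with hη'
  have hsumG : ∀ G : (Fin n → ℝ) → ℝ,
      ∑ i, φ' i * G (η' i) = ∑ i, φ i * G (η i) - φ s * G ηs
        + α * φ s * G η₁ + (1-α) * φ s * G η₂ := by
    intro G
    rw [Fin.sum_univ_castSucc]
    simp only [hφ', hη', Fin.snoc_castSucc, Fin.snoc_last]
    rw [sum_update_mul φ η s (α * φ s) η₁ G, hs]
  have hmem : (∑ i, φ' i * Ratio μ θ (η' i) * Cost u (η' i)) ∈ ConcaveSet u μ θ := by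
    refine ⟨m+1, φ', η', ?_, ?_, ?_, rfl⟩
    · intro i
      refine Fin.lastCases ?_ (fun j => ?_) i
      · simp only [hφ', Fin.snoc_last]
        exact mul_nonneg h1α.le (hφ s)
      · simp only [hφ', Fin.snoc_castSucc]
        by_cases h : j = s
        · subst h; simp only [Function.update_self]
          exact mul_nonneg hα0.le (hφ j)
        · simp only [Function.update_of_ne h]; exact hφ j
    · intro i
      refine Fin.lastCases ?_ (fun j => ?_) i
      · simp only [hη', Fin.snoc_last]; exact hη₂.1
      · simp only [hη', Fin.snoc_castSucc]
        by_cases h : j = s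
        · subst h; simp; exact hη₁.1
        · simp only [Function.update_of_ne h]; exact hη j
    · intro ω
      have := hsumG (fun v => v ω)
      rw [this, hfeas ω]
      have hdecω : φ s * ηs ω = α * φ s * η₁ ω + (1-α) * φ s * η₂ ω := by
        rw [hdec]; ring
      linarith
  have hle : (∑ i, φ' i * Ratio μ θ (η' i) * Cost u (η' i)) ≤ sSup (ConcaveSet u μ θ) :=
    le_csSup (concave_bdd u μ θ hμ hθ hθpos) hmem
  have hval : ∑ i, φ' i * Ratio μ θ (η' i) * Cost u (η' i)
      = ∑ i, φ i * Ratio μ θ (η i) * Cost u (η i) - φ s * (Ratio μ θ ηs * Cost u ηs)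
        + α * φ s * (R₁ * C₁) + (1-α) * φ s * (R₂ * C₂) := by
    have := hsumG (fun v => Ratio μ θ v * Cost u v)
    simp only [← mul_assoc] at this
    rw [this]; ring
  rw [hval, hopt] at hle
  nlinarith [mul_lt_mul_of_pos_left hkey hpos]

end
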